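/- For any α ∈ [−1/2, −1/5] and any pair of prices (p₀, p₁) with p₀ − p₁ = 1/4 and p₀, p₁ ∈ [1/2, 9/8], the regret satisfies R₀(p₀*(α),α) − R₀(p₀,α) + R₁(p₁*(α),α) − R₁(p₁,α) = −3α(p₀*(α) − p₀)², which is at least (3/5)(p₀*(α) − p₀)² and at least (3/5)(p₁*(α) − p₁)². -/

import Mathlib

/-- Demand `d(p, G, α) = 1/2 + α((G+1)p − 1 − G/2)` for groups `G ∈ {0,1}`. -/
noncomputable def dem (p : ℝ) (G : ℕ) (α : ℝ) : ℝ :=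
  1 / 2 + α * (((G : ℝ) + 1) * p - 1 - (G : ℝ) / 2)

/-- Revenue `R_G(p, α) = p · d(p, G, α)`. -/
noncomputable def Rev (G : ℕ) (p α : ℝ) : ℝ := p * dem p G α

/-- Optimal fair price `p_G*(α) = 7/12 − 1/(6α) − G/4`. -/
noncomputable def pstar (G : ℕ) (α : ℝ) : ℝ := 7 / 12 - 1 / (6 * α) - (G : ℝ) / 4

/-- The fair-price regret identity and lower bounds: for `α ∈ [−1/2, −1/5]` and
fair prices `p₀ − p₁ = 1/4` in `[1/2, 9/8]`, the weighted revenue loss equals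
`−3α(p₀*(α) − p₀)²` and is at least `(3/5)(p₀*(α) − p₀)²` and `(3/5)(p₁*(α) − p₁)²`. -/
theorem stmt3 (α : ℝ) (hα : α ∈ Set.Icc (-(1:ℝ)/2) (-(1:ℝ)/5))
    (p₀ p₁ : ℝ) (hfair : p₀ - p₁ = 1 / 4)
    (hp₀ : p₀ ∈ Set.Icc (1/2 : ℝ) (9/8)) (hp₁ : p₁ ∈ Set.Icc (1/2 : ℝ) (9/8)) :
    Rev 0 (pstar 0 α) α - Rev 0 p₀ α + (Rev 1 (pstar 1 α) α - Rev 1 p₁ α)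
        = -3 * α * (pstar 0 α - p₀) ^ 2 ∧
    (3/5) * (pstar 0 α - p₀) ^ 2 ≤
      Rev 0 (pstar 0 α) α - Rev 0 p₀ α + (Rev 1 (pstar 1 α) α - Rev 1 p₁ α) ∧
    (3/5) * (pstar 1 α - p₁) ^ 2 ≤
      Rev 0 (pstar 0 α) α - Rev 0 p₀ α + (Rev 1 (pstar 1 α) α - Rev 1 p₁ α) := by
  obtain ⟨hαl, hαu⟩ := hα
  have hne : α ≠ 0 := by intro h; rw [h] at hαu; norm_num at hαu
  have heq : pstar 1 α - p₁ = pstar 0 α - p₀ := by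
    simp [pstar]; linarith
  have hid : Rev 0 (pstar 0 α) α - Rev 0 p₀ α + (Rev 1 (pstar 1 α) α - Rev 1 p₁ α)
      = -3 * α * (pstar 0 α - p₀) ^ 2 := by
    simp only [Rev, dem, pstar]
    have h1 : p₁ = p₀ - 1/4 := by linarith
    subst h1
    field_simp
    ring
  refine ⟨hid, ?_, ?_⟩
  · rw [hid]; nlinarith [sq_nonneg (pstar 0 α - p₀)]
  · rw [hid, heq]; nlinarith [sq_nonneg (pstar 0 α - p₀)]
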